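/- Let Θ : ℝ → (0,∞) be a C¹ even function satisfying lim_{v→±∞} |v|Θ(v) = 1 and let β ∈ (1,5). Define s(v) = ∫_0^v Θ(u)^{-β} du, let s^{-1} be its inverse, ψ = s' ∘ s^{-1}, and φ(v) = s^{-1}(v)/ψ(v)². Then there exists a constant C > 0 such that for every v > 0, 0 < φ(v) ≤ C v^{(1-2β)/(β+1)}. -/
import Mathlib


open MeasureTheory Filter Topology intervalIntegral

/-- Global bound for `φ(v) = s⁻¹(v)/ψ(v)²`: there is `C > 0` such that
`0 < φ(v) ≤ C v^{(1-2β)/(β+1)}` for all `v > 0`. -/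
theorem stmt9 (β : ℝ) (hβ1 : 1 < β) (hβ5 : β < 5)
    (Θ : ℝ → ℝ) (hΘpos : ∀ v, 0 < Θ v) (hΘC1 : ContDiff ℝ 1 Θ)
    (hΘeven : ∀ v, Θ (-v) = Θ v)
    (hΘtop : Tendsto (fun v : ℝ => |v| * Θ v) atTop (𝓝 1))
    (hΘbot : Tendsto (fun v : ℝ => |v| * Θ v) atBot (𝓝 1))
    (s : ℝ → ℝ) (hs : ∀ v, s v = ∫ u in (0 : ℝ)..v, (Θ u) ^ (-β))
    (sInv : ℝ → ℝ) (hleft : ∀ v, sInv (s v) = v) (hright : ∀ w, s (sInv w) = w) :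
    let ψ : ℝ → ℝ := fun w => (Θ (sInv w)) ^ (-β)
    let φ : ℝ → ℝ := fun w => sInv w / (ψ w) ^ 2
    ∃ C > 0, ∀ v : ℝ, 0 < v →
      0 < φ v ∧ φ v ≤ C * v ^ ((1 - 2 * β) / (β + 1)) := by
  intro ψ φ
  set γ : ℝ := (2 * β - 1) / (β + 1) with hγdef
  have hβ1' : (0:ℝ) < β + 1 := by linarith
  have hγpos : 0 < γ := div_pos (by linarith) hβ1'
  have hcont : Continuous fun u : ℝ => Θ u ^ (-β) :=
    hΘC1.continuous.rpow_const (fun x => Or.inl (hΘpos x).ne')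
  have hib : ∀ a b : ℝ, IntervalIntegrable (fun u => Θ u ^ (-β)) volume a b :=
    fun a b => hcont.intervalIntegrable a b
  have hfpos : ∀ u : ℝ, 0 < Θ u ^ (-β) := fun u => Real.rpow_pos_of_pos (hΘpos u) _
  have hadd : ∀ x y : ℝ, s y = s x + ∫ u in x..y, Θ u ^ (-β) := by
    intro x y
    rw [hs, hs]
    exact (intervalIntegral.integral_add_adjacent_intervals (hib 0 x) (hib x y)).symm
  have hsmono : ∀ ⦃x y : ℝ⦄, x ≤ y → s x ≤ s y := by
    intro x y hxy
    have h0 : 0 ≤ ∫ u in x..y, Θ u ^ (-β) :=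
      intervalIntegral.integral_nonneg hxy (fun u _ => (hfpos u).le)
    have := hadd x y
    linarith
  have hspos : ∀ x : ℝ, 0 < x → 0 < s x := by
    intro x hx
    rw [hs]
    exact intervalIntegral_pos_of_pos (hib 0 x) hfpos hx
  -- extract M
  have h1 : ∀ᶠ v in atTop, 1/2 < |v| * Θ v :=
    hΘtop.eventually (eventually_gt_nhds (by norm_num))
  have h2 : ∀ᶠ v in atTop, |v| * Θ v < 2 :=
    hΘtop.eventually (eventually_lt_nhds (by norm_num))
  obtain ⟨M, hM⟩ := (((h1.and h2).and (eventually_ge_atTop (1:ℝ)))).exists_forall_of_atTop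
  have hM1 : 1 ≤ M := (hM M le_rfl).2
  have hM0 : 0 < M := lt_of_lt_of_le one_pos hM1
  have hsM : 0 < s M := hspos M hM0
  -- bounds for Θ for u ≥ M
  have hΘup : ∀ u : ℝ, M ≤ u → Θ u ≤ 2 / u := by
    intro u hu
    have hu1 : (1:ℝ) ≤ u := le_trans hM1 hu
    have hu0 : 0 < u := lt_of_lt_of_le one_pos hu1
    have := (hM u hu).1.2
    rw [abs_of_pos hu0] at this
    rw [le_div_iff₀ hu0]
    nlinarith
  have hflo : ∀ u : ℝ, M ≤ u → Θ u ^ (-β) ≤ (2 * u) ^ β := by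
    intro u hu
    have hu1 : (1:ℝ) ≤ u := le_trans hM1 hu
    have hu0 : 0 < u := lt_of_lt_of_le one_pos hu1
    have hlo : (2 * u)⁻¹ ≤ Θ u := by
      have := (hM u hu).1.1
      rw [abs_of_pos hu0] at this
      rw [inv_le_iff_one_le_mul₀ (by positivity)]
      nlinarith
    have h1 : Θ u ^ (-β) ≤ ((2 * u)⁻¹) ^ (-β) :=
      Real.rpow_le_rpow_of_nonpos (by positivity) hlo (by linarith)
    calc Θ u ^ (-β) ≤ ((2 * u)⁻¹) ^ (-β) := h1
      _ = (2 * u) ^ β := by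
        rw [Real.inv_rpow (by positivity), Real.rpow_neg (by positivity), inv_inv]
  -- upper bound for s
  have hsub : ∀ x : ℝ, M ≤ x → s x ≤ (s M + 2 ^ β) * x ^ (β + 1) := by
    intro x hx
    have hx1 : (1:ℝ) ≤ x := le_trans hM1 hx
    have hx0 : 0 < x := lt_of_lt_of_le one_pos hx1
    have hxp : (1:ℝ) ≤ x ^ (β + 1) := Real.one_le_rpow hx1 (by linarith)
    have hint : (∫ u in M..x, Θ u ^ (-β)) ≤ (x - M) * (2 * x) ^ β := by
      have hle : ∀ u ∈ Set.Icc M x, Θ u ^ (-β) ≤ (2 * x) ^ β := by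
        intro u hu
        calc Θ u ^ (-β) ≤ (2 * u) ^ β := hflo u hu.1
          _ ≤ (2 * x) ^ β := by
            apply Real.rpow_le_rpow (by linarith [hu.1, hM0]) (by linarith [hu.2]) (by linarith)
      calc (∫ u in M..x, Θ u ^ (-β)) ≤ ∫ _u in M..x, (2 * x) ^ β :=
            intervalIntegral.integral_mono_on hx (hib M x) intervalIntegrable_const hle
        _ = (x - M) * (2 * x) ^ β := by
            rw [intervalIntegral.integral_const, smul_eq_mul]
    have hsx : s x = s M + ∫ u in M..x, Θ u ^ (-β) := hadd M x
    have h2x : (2 * x) ^ β = 2 ^ β * x ^ β := Real.mul_rpow (by norm_num) hx0.le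
    have hxx : x ^ β * x = x ^ (β + 1) := by
      rw [Real.rpow_add_one hx0.ne']
    have h2b : (0:ℝ) < 2 ^ β := Real.rpow_pos_of_pos (by norm_num) _
    have hxb : (0:ℝ) < x ^ β := Real.rpow_pos_of_pos hx0 _
    have hbound : (x - M) * (2 * x) ^ β ≤ 2 ^ β * x ^ (β + 1) := by
      rw [h2x, ← hxx]
      have hxM : x - M ≤ x := by linarith
      nlinarith [mul_le_mul_of_nonneg_right hxM (mul_pos h2b hxb).le]
    nlinarith [hsM]
  -- max of Θ on [0, M]
  obtain ⟨c, hc, hcmax⟩ := isCompact_Icc.exists_isMaxOn (Set.nonempty_Icc.mpr hM0.le)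
    (hΘC1.continuous.continuousOn (s := Set.Icc 0 M))
  set A : ℝ := Θ c with hA
  have hA0 : 0 < A := hΘpos c
  -- the two constants
  set C1 : ℝ := M * A ^ (2 * β) * s M ^ γ with hC1
  set C2 : ℝ := 2 ^ (2 * β) * (s M + 2 ^ β) ^ γ with hC2
  have hK0 : (0:ℝ) < s M + 2 ^ β := by positivity
  have hC2pos : 0 < C2 := by positivity
  set C : ℝ := max C1 C2 with hC
  have hCpos : 0 < C := lt_max_of_lt_right hC2pos
  -- the key pointwise bound
  have key : ∀ x : ℝ, 0 < x → x * Θ x ^ (2 * β) * s x ^ γ ≤ C := by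
    intro x hx
    rcases le_total x M with hxM | hMx
    · refine le_trans ?_ (le_max_left C1 C2)
      have hΘA : Θ x ≤ A := hcmax ⟨hx.le, hxM⟩
      have hsxM : s x ≤ s M := hsmono hxM
      have hsx0 : 0 ≤ s x := (hspos x hx).le
      have b1 : Θ x ^ (2 * β) ≤ A ^ (2 * β) :=
        Real.rpow_le_rpow (hΘpos x).le hΘA (by linarith)
      have b2 : s x ^ γ ≤ s M ^ γ := Real.rpow_le_rpow hsx0 hsxM hγpos.le
      rw [hC1]
      exact mul_le_mul (mul_le_mul hxM b1 (Real.rpow_nonneg (hΘpos x).le _) hM0.le) b2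
        (Real.rpow_nonneg hsx0 _) (mul_nonneg hM0.le (Real.rpow_nonneg hA0.le _))
    · refine le_trans ?_ (le_max_right C1 C2)
      have hx1 : (1:ℝ) ≤ x := le_trans hM1 hMx
      have hx0 : 0 < x := lt_of_lt_of_le one_pos hx1
      have hΘx : Θ x ≤ 2 / x := hΘup x hMx
      have hsx : s x ≤ (s M + 2 ^ β) * x ^ (β + 1) := hsub x hMx
      have hsx0 : 0 ≤ s x := (hspos x hx).le
      have b1 : Θ x ^ (2 * β) ≤ (2 / x) ^ (2 * β) :=
        Real.rpow_le_rpow (hΘpos x).le hΘx (by linarith)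
      have b2 : s x ^ γ ≤ ((s M + 2 ^ β) * x ^ (β + 1)) ^ γ :=
        Real.rpow_le_rpow hsx0 hsx hγpos.le
      have step1 : x * Θ x ^ (2 * β) * s x ^ γ ≤
          x * (2 / x) ^ (2 * β) * ((s M + 2 ^ β) * x ^ (β + 1)) ^ γ :=
        mul_le_mul (mul_le_mul le_rfl b1 (Real.rpow_nonneg (hΘpos x).le _) hx0.le) b2
          (Real.rpow_nonneg hsx0 _)
          (mul_nonneg hx0.le (Real.rpow_nonneg (by positivity) _))
      refine step1.trans_eq ?_
      have e1 : (2 / x) ^ (2 * β) = 2 ^ (2 * β) / x ^ (2 * β) :=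
        Real.div_rpow (by norm_num) hx0.le (2 * β)
      have e2 : ((s M + 2 ^ β) * x ^ (β + 1)) ^ γ
          = (s M + 2 ^ β) ^ γ * x ^ (2 * β - 1) := by
        rw [Real.mul_rpow hK0.le (Real.rpow_nonneg hx0.le _), ← Real.rpow_mul hx0.le]
        congr 1
        rw [hγdef]
        field_simp
      rw [hC2, e1, e2]
      have exx : x * x ^ (2 * β - 1) = x ^ (2 * β) := by
        nth_rewrite 1 [← Real.rpow_one x]
        rw [← Real.rpow_add hx0]
        ring_nf
      have hxb : (0:ℝ) < x ^ (2 * β) := Real.rpow_pos_of_pos hx0 _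
      rw [div_eq_mul_inv]
      have : x * (2 ^ (2 * β) * (x ^ (2 * β))⁻¹) * ((s M + 2 ^ β) ^ γ * x ^ (2 * β - 1))
          = 2 ^ (2 * β) * (s M + 2 ^ β) ^ γ * ((x * x ^ (2 * β - 1)) * (x ^ (2 * β))⁻¹) := by
        ring
      rw [this, exx, mul_inv_cancel₀ hxb.ne', mul_one]
  -- conclusion
  refine ⟨C, hCpos, ?_⟩
  intro v hv
  set x : ℝ := sInv v with hxdef
  have hsxv : s x = v := hright v
  have hx0 : 0 < x := by
    by_contra h
    push_neg at h
    have : s x ≤ s 0 := hsmono h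
    have hs0 : s 0 = 0 := by rw [hs]; simp
    rw [hsxv, hs0] at this
    linarith
  have hψ2 : (Θ x ^ (-β)) ^ 2 = Θ x ^ (-(2 * β)) := by
    rw [sq, ← Real.rpow_add (hΘpos x)]
    ring_nf
  have hφ : φ v = x * Θ x ^ (2 * β) := by
    show x / (Θ x ^ (-β)) ^ 2 = x * Θ x ^ (2 * β)
    rw [hψ2, Real.rpow_neg (hΘpos x).le, div_eq_mul_inv, inv_inv]
  have hΘ2b : 0 < Θ x ^ (2 * β) := Real.rpow_pos_of_pos (hΘpos x) _
  constructor
  · rw [hφ]; positivity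
  · rw [hφ, ← hsxv]
    have hexp : (1 - 2 * β) / (β + 1) = -γ := by rw [hγdef]; ring
    rw [hexp, Real.rpow_neg (hspos x hx0).le, ← div_eq_mul_inv,
      le_div_iff₀ (Real.rpow_pos_of_pos (hspos x hx0) _)]
    exact key x hx0
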